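/- Let T be a balanced tree with k levels (k ≥ 2) and L its graph Laplacian. Let f be a stratified function on the vertices and let g = (g(0), …, g(k−1)) be its vector of level values, i.e. f(v) = g(level of v) for every vertex v. Then Lf = λf if and only if S^{(0)} g = λ g. In particular, λ admits a nonzero stratified eigenfunction of L if and only if λ is an eigenvalue of S^{(0)}. -/

import Mathlib

open scoped Classical

/-- Vertices of the balanced tree with `k` levels and branching sequence `c`:
a vertex at level `l` (`0 ≤ l ≤ k-1`) is a function assigning to each `i < l` a
label in `Fin (c i)` (the label of the level-`(i+1)` ancestor among its siblings). -/
abbrev BTVert (k : ℕ) (c : ℕ → ℕ) : Type := Σ l : Fin k, ∀ i : Fin l.val, Fin (c i.val)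

/-- `p` is the parent of `v` in the balanced tree. -/
def IsParentOf {k : ℕ} {c : ℕ → ℕ} (p v : BTVert k c) : Prop :=
  ∃ h : p.1.val + 1 = v.1.val,
    ∀ i : Fin p.1.val, v.2 ⟨i.val, by have := i.isLt; omega⟩ = p.2 i

/-- The balanced tree as a simple graph: each non-root vertex is adjacent to its parent. -/
def btGraph (k : ℕ) (c : ℕ → ℕ) : SimpleGraph (BTVert k c) where
  Adj u v := IsParentOf u v ∨ IsParentOf v u
  symm := ⟨fun u v h => h.symm⟩
  loopless := ⟨fun v h => by
    rcases h with ⟨h, -⟩ | ⟨h, -⟩ <;> omega⟩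

/-- The root (the unique vertex at level 0). -/
def btRoot (k : ℕ) (c : ℕ → ℕ) (hk : 0 < k) : BTVert k c :=
  ⟨⟨0, hk⟩, fun i => i.elim0⟩

/-- `u` belongs to the maximal subtree rooted at `v` (`u` is `v` or a descendant of `v`). -/
def InSubtree {k : ℕ} {c : ℕ → ℕ} (v u : BTVert k c) : Prop :=
  ∃ h : v.1.val ≤ u.1.val,
    ∀ i : Fin v.1.val, u.2 ⟨i.val, by have := i.isLt; omega⟩ = v.2 i

/-- A function on the vertices is stratified if it only depends on the level. -/
def Stratified {k : ℕ} {c : ℕ → ℕ} (f : BTVert k c → ℝ) : Prop :=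
  ∀ u v : BTVert k c, u.1 = v.1 → f u = f v

/-- Number of vertices at level `l`: `n(l) = c(0) ⋯ c(l-1)`. -/
def nlev (c : ℕ → ℕ) (l : ℕ) : ℕ := ∏ i ∈ Finset.range l, c i

/-- The common degree `d(l)` of the vertices at level `l`. -/
def branchDeg (k : ℕ) (c : ℕ → ℕ) (l : ℕ) : ℕ :=
  if l = 0 then c 0 else if l = k - 1 then 1 else c l + 1

/-- The symmetric tridiagonal matrix `T^{(l0)}` with diagonal `d(l0), …, d(k-1)` and
off-diagonal `√c(l0), …, √c(k-2)`. -/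
noncomputable def matT (k : ℕ) (c : ℕ → ℕ) (l0 : ℕ) :
    Matrix (Fin (k - l0)) (Fin (k - l0)) ℝ := fun i j =>
  if i = j then (branchDeg k c (l0 + i.val) : ℝ)
  else if i.val + 1 = j.val then Real.sqrt (c (l0 + i.val))
  else if j.val + 1 = i.val then Real.sqrt (c (l0 + j.val))
  else 0

/-- The tridiagonal matrix `S^{(l0)}` with diagonal `d(l0), …, d(k-1)`, subdiagonal
entries `-1` and superdiagonal entries `-c(l0), …, -c(k-2)`. -/
def matS (k : ℕ) (c : ℕ → ℕ) (l0 : ℕ) :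
    Matrix (Fin (k - l0)) (Fin (k - l0)) ℝ := fun i j =>
  if i = j then (branchDeg k c (l0 + i.val) : ℝ)
  else if i.val + 1 = j.val then -(c (l0 + i.val) : ℝ)
  else if j.val + 1 = i.val then -1
  else 0

/-- `lam` is an eigenvalue of the matrix `A`. -/
def IsEigenvalue {V : Type*} [Fintype V] (A : Matrix V V ℝ) (lam : ℝ) : Prop :=
  ∃ f : V → ℝ, f ≠ 0 ∧ A.mulVec f = lam • f

/-- The (geometric) multiplicity of `lam` as an eigenvalue of `A`. -/
noncomputable def eigMult {V : Type*} [Fintype V] (A : Matrix V V ℝ) (lam : ℝ) : ℕ :=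
  Module.finrank ℝ
    ↥(LinearMap.ker (A.mulVecLin - lam • (LinearMap.id : (V → ℝ) →ₗ[ℝ] (V → ℝ))))

/-- The Dirichlet Laplacian on a subset `Ω` of the vertices of the balanced tree:
the principal submatrix of the Laplacian with rows and columns indexed by `Ω`. -/
noncomputable def dirichletLap (k : ℕ) (c : ℕ → ℕ) (Ω : Set (BTVert k c)) :
    Matrix Ω Ω ℝ := fun u v => (btGraph k c).lapMatrix ℝ u.1 v.1

lemma IsParentOf.level {k : ℕ} {c : ℕ → ℕ} {p v : BTVert k c} (h : IsParentOf p v) :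
    p.1.val + 1 = v.1.val := h.1

lemma BTVert.ext' {k : ℕ} {c : ℕ → ℕ} {u w : BTVert k c} (h1 : u.1.val = w.1.val)
    (h2 : ∀ n (hn : n < u.1.val) (hn' : n < w.1.val), u.2 ⟨n, hn⟩ = w.2 ⟨n, hn'⟩) : u = w := by
  obtain ⟨⟨l, hl⟩, a⟩ := u
  obtain ⟨⟨m, hm⟩, b⟩ := w
  have h1' : l = m := h1
  subst h1'
  exact Sigma.ext rfl (heq_of_eq (funext fun i => h2 i.val i.isLt i.isLt))

def parentV {k : ℕ} {c : ℕ → ℕ} (v : BTVert k c) (h : 0 < v.1.val) : BTVert k c :=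
  ⟨⟨v.1.val - 1, by have := v.1.isLt; omega⟩, fun i => v.2 ⟨i.val, by
    have h2 : i.val < v.1.val - 1 := i.isLt; omega⟩⟩

lemma isParentOf_parentV {k : ℕ} {c : ℕ → ℕ} (v : BTVert k c) (h : 0 < v.1.val) :
    IsParentOf (parentV v h) v :=
  ⟨by show v.1.val - 1 + 1 = v.1.val; omega, fun i => rfl⟩

lemma eq_parentV {k : ℕ} {c : ℕ → ℕ} {u v : BTVert k c} (hp : IsParentOf u v)
    (h : 0 < v.1.val) : u = parentV v h := by
  obtain ⟨he, ha⟩ := hp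
  apply BTVert.ext'
  · show u.1.val = v.1.val - 1; omega
  · intro n hn hn'
    have := ha ⟨n, hn⟩
    rw [← this]
    rfl

def childV {k : ℕ} {c : ℕ → ℕ} (v : BTVert k c) (h : v.1.val + 1 < k)
    (j : Fin (c v.1.val)) : BTVert k c :=
  ⟨⟨v.1.val + 1, h⟩, fun i =>
    if hi : i.val < v.1.val then v.2 ⟨i.val, hi⟩
    else Fin.cast (congrArg c (by
      have h2 : i.val < v.1.val + 1 := i.isLt
      omega)) j⟩

lemma isParentOf_childV {k : ℕ} {c : ℕ → ℕ} (v : BTVert k c) (h : v.1.val + 1 < k)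
    (j : Fin (c v.1.val)) : IsParentOf v (childV v h j) := by
  refine ⟨rfl, fun i => ?_⟩
  show dite _ _ _ = _
  rw [dif_pos i.isLt]

lemma child_eq_childV {k : ℕ} {c : ℕ → ℕ} {v u : BTVert k c} (hp : IsParentOf v u)
    (h : v.1.val + 1 < k) : u = childV v h (u.2 ⟨v.1.val, by have := hp.level; omega⟩) := by
  obtain ⟨he, ha⟩ := hp
  apply BTVert.ext'
  · show u.1.val = v.1.val + 1; omega
  · intro n hn hn'
    have hn2 : n < v.1.val + 1 := hn'
    show _ = dite _ _ _
    by_cases hnl : n < v.1.val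
    · rw [dif_pos hnl]
      have := ha ⟨n, hnl⟩
      rw [← this]
    · rw [dif_neg hnl]
      have hnv : n = v.1.val := by omega
      subst hnv
      apply Fin.ext
      rw [Fin.coe_cast]

lemma parent_sum {k : ℕ} {c : ℕ → ℕ} (v : BTVert k c) (F : BTVert k c → ℝ) :
    (∑ u : BTVert k c, if IsParentOf u v then F u else 0) =
      if h : 0 < v.1.val then F (parentV v h) else 0 := by
  by_cases h : 0 < v.1.val
  · rw [dif_pos h, Fintype.sum_eq_single (parentV v h)]
    · rw [if_pos (isParentOf_parentV v h)]
    · intro u hu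
      rw [if_neg]
      intro hp
      exact hu (eq_parentV hp h)
  · rw [dif_neg h]
    apply Finset.sum_eq_zero
    intro u _
    rw [if_neg]
    rintro ⟨he, -⟩
    omega

lemma child_sum {k : ℕ} {c : ℕ → ℕ} (v : BTVert k c) (F : BTVert k c → ℝ) :
    (∑ u : BTVert k c, if IsParentOf v u then F u else 0) =
      if h : v.1.val + 1 < k then ∑ j : Fin (c v.1.val), F (childV v h j) else 0 := by
  by_cases h : v.1.val + 1 < k
  · rw [dif_pos h, ← Finset.sum_filter]
    refine Finset.sum_bij'
      (fun u (hu : u ∈ Finset.filter (fun u => IsParentOf v u) Finset.univ) =>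
        (u.2 ⟨v.1.val, by have := (Finset.mem_filter.mp hu).2.level; omega⟩ : Fin (c v.1.val)))
      (fun j _ => childV v h j) (fun u hu => Finset.mem_univ _)
      (fun j _ => Finset.mem_filter.mpr ⟨Finset.mem_univ _, isParentOf_childV v h j⟩)
      ?_ ?_ ?_
    · intro u hu
      exact (child_eq_childV (Finset.mem_filter.mp hu).2 h).symm
    · intro j _
      apply Fin.ext
      show ((dite _ _ _ : Fin _)).val = j.val
      rw [dif_neg (lt_irrefl v.1.val)]
      simp
    · intro u hu
      exact congrArg F (child_eq_childV (Finset.mem_filter.mp hu).2 h)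
  · rw [dif_neg h]
    apply Finset.sum_eq_zero
    intro u _
    rw [if_neg]
    rintro ⟨he, -⟩
    have := u.1.isLt
    omega

noncomputable def rowR (k : ℕ) (c : ℕ → ℕ) (g : Fin k → ℝ) (i : Fin k) : ℝ :=
  (branchDeg k c i.val : ℝ) * g i
  - (if h : 0 < i.val then g ⟨i.val - 1, by have := i.isLt; omega⟩ else 0)
  - (if h : i.val + 1 < k then (c i.val : ℝ) * g ⟨i.val + 1, h⟩ else 0)

lemma adj_sum {k : ℕ} {c : ℕ → ℕ} (v : BTVert k c) (F : BTVert k c → ℝ) :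
    (∑ u : BTVert k c, if (btGraph k c).Adj v u then F u else 0) =
      (if h : 0 < v.1.val then F (parentV v h) else 0)
      + (if h : v.1.val + 1 < k then ∑ j : Fin (c v.1.val), F (childV v h j) else 0) := by
  rw [← parent_sum v F, ← child_sum v F, ← Finset.sum_add_distrib]
  apply Finset.sum_congr rfl
  intro u _
  have hadj : (btGraph k c).Adj v u ↔ (IsParentOf v u ∨ IsParentOf u v) := Iff.rfl
  by_cases h1 : IsParentOf v u
  · have h2 : ¬ IsParentOf u v := by
      intro h2; have := h1.level; have := h2.level; omega
    rw [if_pos (hadj.mpr (Or.inl h1)), if_neg h2, if_pos h1, zero_add]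
  · by_cases h2 : IsParentOf u v
    · rw [if_pos (hadj.mpr (Or.inr h2)), if_pos h2, if_neg h1, add_zero]
    · rw [if_neg (fun h => (hadj.mp h).elim h1 h2), if_neg h1, if_neg h2, add_zero]

lemma branchDeg_eq {k : ℕ} (hk : 2 ≤ k) (c : ℕ → ℕ) {l : ℕ} (hl : l < k) :
    (branchDeg k c l : ℝ) =
      (if 0 < l then 1 else 0) + (if l + 1 < k then (c l : ℝ) else 0) := by
  by_cases h0 : l = 0
  · subst h0
    rw [branchDeg, if_pos rfl, if_neg (lt_irrefl 0), if_pos (by omega : 0 + 1 < k)]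
    ring
  · by_cases h1 : l = k - 1
    · rw [branchDeg, if_neg h0, if_pos h1, if_pos (by omega), if_neg (by omega)]
      norm_num
    · rw [branchDeg, if_neg h0, if_neg h1, if_pos (by omega), if_pos (by omega)]
      push_cast
      ring

lemma adj_sum_g {k : ℕ} {c : ℕ → ℕ} (g : Fin k → ℝ) (v : BTVert k c) :
    (∑ u : BTVert k c, if (btGraph k c).Adj v u then g u.1 else 0) =
      (if h : 0 < v.1.val then g ⟨v.1.val - 1, by have := v.1.isLt; omega⟩ else 0)
      + (if h : v.1.val + 1 < k then (c v.1.val : ℝ) * g ⟨v.1.val + 1, h⟩ else 0) := by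
  rw [adj_sum v (fun u => g u.1)]
  congr 1
  by_cases h : v.1.val + 1 < k
  · rw [dif_pos h, dif_pos h]
    show ∑ _j : Fin (c v.1.val), g ⟨v.1.val + 1, h⟩ = _
    simp [Finset.card_univ, mul_comm]
  · rw [dif_neg h, dif_neg h]

lemma deg_eq {k : ℕ} (hk : 2 ≤ k) {c : ℕ → ℕ} (v : BTVert k c) :
    (((btGraph k c).degree v : ℕ) : ℝ) = (branchDeg k c v.1.val : ℝ) := by
  rw [SimpleGraph.degree, SimpleGraph.neighborFinset_eq_filter, Finset.card_filter,
    branchDeg_eq hk c v.1.isLt]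
  push_cast
  rw [adj_sum v (fun _ => (1 : ℝ))]
  by_cases h1 : 0 < v.1.val <;> by_cases h2 : v.1.val + 1 < k <;>
    simp [h1, h2, Finset.card_univ]

lemma Lrow {k : ℕ} (hk : 2 ≤ k) (c : ℕ → ℕ) (g : Fin k → ℝ) (v : BTVert k c) :
    ((btGraph k c).lapMatrix ℝ).mulVec (fun u => g u.1) v = rowR k c g v.1 := by
  rw [SimpleGraph.lapMatrix_mulVec_apply, SimpleGraph.neighborFinset_eq_filter,
    Finset.sum_filter, adj_sum_g g v, deg_eq hk v, rowR]
  ring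

lemma Srow {k : ℕ} (hk : 2 ≤ k) (c : ℕ → ℕ) (g : Fin k → ℝ) (i : Fin k) :
    (matS k c 0).mulVec g i = rowR k c g i := by
  have hik := i.isLt
  have key : ∀ j : Fin (k - 0), matS k c 0 i j * g j =
      ((if i = j then (branchDeg k c (0 + i.val) : ℝ) * g j else 0)
      + (if i.val + 1 = j.val then (-(c (0 + i.val) : ℝ)) * g j else 0))
      + (if j.val + 1 = i.val then (-1 : ℝ) * g j else 0) := by
    intro j
    by_cases h1 : i = j
    · subst h1
      show (if i = i then (branchDeg k c (0 + i.val) : ℝ) else _) * g i = _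
      rw [if_pos rfl, if_pos rfl, if_neg (by omega), if_neg (by omega)]
      ring
    · show (if i = j then _ else if i.val + 1 = j.val then -(c (0 + i.val) : ℝ)
        else if j.val + 1 = i.val then (-1:ℝ) else 0) * g j = _
      rw [if_neg h1, if_neg h1]
      by_cases h2 : i.val + 1 = j.val
      · rw [if_pos h2, if_pos h2, if_neg (by omega)]
        ring
      · rw [if_neg h2, if_neg h2]
        by_cases h3 : j.val + 1 = i.val
        · rw [if_pos h3, if_pos h3]; ring
        · rw [if_neg h3, if_neg h3]; ring
  rw [show (matS k c 0).mulVec g i = ∑ j : Fin (k - 0), matS k c 0 i j * g j from rfl]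
  rw [Finset.sum_congr rfl (fun j _ => key j), Finset.sum_add_distrib, Finset.sum_add_distrib]
  rw [Finset.sum_ite_eq (Finset.univ : Finset (Fin (k - 0))) i
    (fun j => (branchDeg k c (0 + i.val) : ℝ) * g j), if_pos (Finset.mem_univ i)]
  have hB : (∑ j : Fin (k - 0), if i.val + 1 = j.val then (-(c (0 + i.val) : ℝ)) * g j else 0)
      = if h : i.val + 1 < k then (-(c i.val : ℝ)) * g ⟨i.val + 1, h⟩ else 0 := by
    by_cases h : i.val + 1 < k
    · rw [dif_pos h]
      rw [Finset.sum_congr rfl (fun j _ => show (if i.val + 1 = j.val then (-(c (0 + i.val) : ℝ)) * g j else 0) = if j = (⟨i.val + 1, by omega⟩ : Fin (k - 0))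
          then (-(c (0 + i.val) : ℝ)) * g j else 0 by
        by_cases hj : i.val + 1 = j.val
        · rw [if_pos hj, if_pos (Fin.ext hj.symm)]
        · rw [if_neg hj, if_neg (fun hh => hj (by rw [hh]))])]
      simp only [Finset.sum_ite_eq', Finset.mem_univ, if_true]
      norm_num
    · rw [dif_neg h]
      apply Finset.sum_eq_zero
      intro j _
      rw [if_neg (by have := j.isLt; omega)]
  have hC : (∑ j : Fin (k - 0), if j.val + 1 = i.val then (-1 : ℝ) * g j else 0)
      = if h : 0 < i.val then (-1 : ℝ) * g ⟨i.val - 1, by omega⟩ else 0 := by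
    by_cases h : 0 < i.val
    · rw [dif_pos h]
      rw [Finset.sum_congr rfl (fun j _ => show (if j.val + 1 = i.val then (-1 : ℝ) * g j else 0) = if j = (⟨i.val - 1, by omega⟩ : Fin (k - 0))
          then (-1 : ℝ) * g j else 0 by
        by_cases hj : j.val + 1 = i.val
        · rw [if_pos hj, if_pos (Fin.ext (show j.val = i.val - 1 by omega))]
        · rw [if_neg hj, if_neg (fun hh => hj (by rw [hh]; show i.val - 1 + 1 = i.val; omega))])]
      simp only [Finset.sum_ite_eq', Finset.mem_univ, if_true]
    · rw [dif_neg h]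
      apply Finset.sum_eq_zero
      intro j _
      rw [if_neg (by omega)]
  rw [hB, hC, rowR]
  simp only [Nat.zero_add]
  by_cases h1 : 0 < i.val <;> by_cases h2 : i.val + 1 < k
  · simp only [dif_pos h1, dif_pos h2]; ring
  · simp only [dif_pos h1, dif_neg h2]; ring
  · simp only [dif_neg h1, dif_pos h2]; ring
  · simp only [dif_neg h1, dif_neg h2]; ring

def canonV {k : ℕ} {c : ℕ → ℕ} (hk : 2 ≤ k) (hc : ∀ l, l ≤ k - 2 → 1 ≤ c l)
    (i : Fin k) : BTVert k c :=
  ⟨i, fun j => ⟨0, by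
    have hj : j.val < i.val := j.isLt
    have hik := i.isLt
    exact hc j.val (by omega)⟩⟩

lemma canonV_fst {k : ℕ} {c : ℕ → ℕ} (hk : 2 ≤ k) (hc : ∀ l, l ≤ k - 2 → 1 ≤ c l)
    (i : Fin k) : (canonV hk hc i).1 = i := rfl

lemma main_iff {k : ℕ} (hk : 2 ≤ k) {c : ℕ → ℕ} (hc : ∀ l, l ≤ k - 2 → 1 ≤ c l)
    (lam : ℝ) (g : Fin k → ℝ) :
    ((btGraph k c).lapMatrix ℝ).mulVec (fun v => g v.1) = lam • (fun v => g v.1) ↔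
      (matS k c 0).mulVec g = lam • g := by
  constructor
  · intro H
    funext i
    have h1 := congrFun H (canonV hk hc i)
    rw [Lrow hk c g (canonV hk hc i)] at h1
    rw [canonV_fst hk hc i] at h1
    rw [Srow hk c g i]
    simpa [canonV_fst] using h1
  · intro H
    funext v
    rw [Lrow hk c g v]
    have h1 := congrFun H v.1
    rw [Srow hk c g v.1] at h1
    simpa using h1

/-- for a stratified function `f` with vector of level values `g`,
`Lf = λf` iff `S⁽⁰⁾ g = λ g`; in particular `λ` has a nonzero stratified eigenfunction of `L`
iff `λ` is an eigenvalue of `S⁽⁰⁾`. -/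
theorem stratified_eigen_iff_matS (k : ℕ) (hk : 2 ≤ k) (c : ℕ → ℕ)
    (hc : ∀ l, l ≤ k - 2 → 1 ≤ c l) (lam : ℝ) (f : BTVert k c → ℝ) (g : Fin k → ℝ)
    (hfg : ∀ v : BTVert k c, f v = g v.1) :
    (((btGraph k c).lapMatrix ℝ).mulVec f = lam • f ↔
        (matS k c 0).mulVec g = lam • g) ∧
      ((∃ f' : BTVert k c → ℝ, f' ≠ 0 ∧ Stratified f' ∧
          ((btGraph k c).lapMatrix ℝ).mulVec f' = lam • f') ↔
        IsEigenvalue (matS k c 0) lam) := by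
  have hf : f = fun v => g v.1 := funext hfg
  subst hf
  constructor
  · exact main_iff hk hc lam g
  constructor
  · rintro ⟨f', hne, hstrat, heig⟩
    refine ⟨fun i => f' (canonV hk hc i), ?_, ?_⟩
    · intro h0
      apply hne
      funext v
      have : f' v = f' (canonV hk hc v.1) := hstrat v (canonV hk hc v.1) rfl
      rw [this]
      exact (congrFun h0 v.1).trans rfl
    · have hf' : f' = fun v => (fun i => f' (canonV hk hc i)) v.1 := by
        funext v
        exact hstrat v (canonV hk hc v.1) rfl
      exact (main_iff hk hc lam (fun i => f' (canonV hk hc i))).mp (by rw [← hf']; exact heig)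
  · rintro ⟨g', hne, heig⟩
    refine ⟨fun v => g' v.1, ?_, ?_, ?_⟩
    · intro h0
      apply hne
      funext i
      have := congrFun h0 (canonV hk hc i)
      simpa [canonV_fst] using this
    · intro u v huv
      simp only []
      rw [huv]
    · rw [main_iff hk hc lam g']
      exact heig
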